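/- Failure of the Poincaré inequality for the irrational rotation random walk: Let X = S¹ with arclength distance, ν the 1-dimensional Hausdorff measure on S¹, θ irrational, and m_x := (1/2)δ_{T_{−θ}(x)} + (1/2)δ_{T_θ(x)} where T_θ(x) = x·e^{2πiθ}. Then ν is reversible with respect to m, but for every p > 1 there exists no constant Λ > 0 such that ‖u − (1/(2π))∫_X u dν‖_{L^p(X,ν)} ≤ Λ (∫_X ∫_X |u(y)−u(x)|^p dm_x(y) dν(x))^{1/p} for all u ∈ L^p(X,ν). -/

import Mathlib

open MeasureTheory Real
open scoped ENNReal

instance my_fact_zero_lt_one : Fact ((0:ℝ) < 1) := ⟨one_pos⟩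

lemma my_fourier_re (q : ℤ) (x : ℝ) :
    (fourier q (x : AddCircle (1:ℝ)) : ℂ).re = Real.cos (2 * π * q * x) := by
  rw [fourier_coe_apply]
  rw [show 2 * (π:ℂ) * Complex.I * q * x / ((1:ℝ):ℂ) = ((2 * π * q * x : ℝ) : ℂ) * Complex.I by
    push_cast; ring]
  exact Complex.exp_ofReal_mul_I_re _

lemma my_sin_two_pi_q (q : ℤ) : Real.sin (2 * π * q) = 0 := by
  rw [show (2 * π * q : ℝ) = (2 * q : ℤ) * π by push_cast; ring, Real.sin_int_mul_pi]

lemma my_cos_int (q : ℤ) (hq : q ≠ 0) :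
    ∫ x : AddCircle (1:ℝ), (fourier q x : ℂ).re = 0 := by
  rw [← AddCircle.intervalIntegral_preimage (1:ℝ) 0]
  have hc : (2 * π * q : ℝ) ≠ 0 := by
    have := Real.pi_ne_zero
    simp [hq, this]
  calc ∫ x in (0:ℝ)..(0+1), (fourier q (x : AddCircle (1:ℝ)) : ℂ).re
      = ∫ x in (0:ℝ)..1, Real.cos ((2 * π * q) * x) := by
        rw [zero_add]; congr 1; ext x; rw [my_fourier_re]
    _ = 0 := by
        rw [intervalIntegral.integral_comp_mul_left (fun y => Real.cos y) hc]
        simp [my_sin_two_pi_q q]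

lemma my_cos_sq_int (q : ℤ) (hq : q ≠ 0) :
    ∫ x : AddCircle (1:ℝ), ((fourier q x : ℂ).re) ^ 2 = 1 / 2 := by
  rw [← AddCircle.intervalIntegral_preimage (1:ℝ) 0]
  have hc : (2 * π * q : ℝ) ≠ 0 := by
    have := Real.pi_ne_zero
    simp [hq, this]
  calc ∫ x in (0:ℝ)..(0+1), (fourier q (x : AddCircle (1:ℝ)) : ℂ).re ^ 2
      = ∫ x in (0:ℝ)..1, Real.cos ((2 * π * q) * x) ^ 2 := by
        rw [zero_add]; congr 1; ext x; rw [my_fourier_re]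
    _ = 1 / 2 := by
        rw [intervalIntegral.integral_comp_mul_left (fun y => Real.cos y ^ 2) hc]
        simp [my_sin_two_pi_q q]
        field_simp

lemma my_dense (θ : ℝ) (hθ : Irrational θ) :
    Dense (Set.range fun q : ℤ => q • ((θ : AddCircle (1:ℝ)))) := by
  have hS : Dense ((AddSubgroup.closure ({1, θ} : Set ℝ) : AddSubgroup ℝ) : Set ℝ) := by
    rcases AddSubgroup.dense_or_cyclic (AddSubgroup.closure ({1, θ} : Set ℝ)) with h | ⟨a, ha⟩
    · exact h
    · exfalso
      have h1 : (1:ℝ) ∈ AddSubgroup.closure ({1, θ} : Set ℝ) :=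
        AddSubgroup.subset_closure (by simp)
      have h2 : θ ∈ AddSubgroup.closure ({1, θ} : Set ℝ) :=
        AddSubgroup.subset_closure (by simp)
      rw [ha, AddSubgroup.mem_closure_singleton] at h1 h2
      obtain ⟨n, hn⟩ := h1
      obtain ⟨m, hm⟩ := h2
      rw [zsmul_eq_mul] at hn hm
      have ha' : a = 1 / (n:ℝ) := eq_one_div_of_mul_eq_one_left (by linarith [hn, mul_comm (n:ℝ) a] : a * (n:ℝ) = 1)
      refine hθ ⟨(m : ℚ) / (n : ℚ), ?_⟩
      rw [← hm, ha']
      push_cast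
      ring
  have hcont : Continuous ((↑) : ℝ → AddCircle (1:ℝ)) := continuous_quotient_mk'
  have himg : Dense ((fun x : ℝ => (x : AddCircle (1:ℝ))) ''
      ((AddSubgroup.closure ({1, θ} : Set ℝ) : AddSubgroup ℝ) : Set ℝ)) := by
    intro z
    obtain ⟨x, rfl⟩ := QuotientAddGroup.mk_surjective z
    exact image_closure_subset_closure_image hcont ⟨x, hS x, rfl⟩
  refine himg.mono ?_
  rintro - ⟨s, hs, rfl⟩
  have hs' : s ∈ AddSubgroup.closure ({1, θ} : Set ℝ) := hs
  rw [AddSubgroup.mem_closure_pair] at hs'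
  obtain ⟨a, b, rfl⟩ := hs'
  refine ⟨b, ?_⟩
  push_cast
  have h1 : ((1:ℝ) : AddCircle (1:ℝ)) = 0 := by
    rw [AddCircle.coe_eq_zero_iff]; exact ⟨1, by simp⟩
  simp [h1]

lemma my_small (θ : ℝ) (hθ : Irrational θ) {δ : ℝ} (hδ : 0 < δ) :
    ∃ q : ℤ, q ≠ 0 ∧ ‖(q • (θ : AddCircle (1:ℝ)))‖ < δ := by
  set c : ℝ := min (δ/4) (1/4) with hc
  have hc0 : 0 < c := by positivity
  have hcle : c ≤ 1/4 := min_le_right _ _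
  have hcδ : c ≤ δ/4 := min_le_left _ _
  set θ₀ : AddCircle (1:ℝ) := (c : AddCircle (1:ℝ)) with hθ₀
  have habs : |c| ≤ |(1:ℝ)|/2 := by rw [abs_of_pos hc0, abs_one]; linarith
  have hnorm : ‖θ₀‖ = c := by
    rw [hθ₀, (AddCircle.norm_coe_eq_abs_iff (1:ℝ) one_ne_zero).2 habs, abs_of_pos hc0]
  obtain ⟨x, hx, hxb⟩ := (my_dense θ hθ).exists_mem_open Metric.isOpen_ball
    ⟨θ₀, Metric.mem_ball_self hc0⟩
  obtain ⟨q, rfl⟩ := hx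
  refine ⟨q, ?_, ?_⟩
  · rintro rfl
    simp only [zero_smul] at hxb
    rw [Metric.mem_ball, dist_zero_left, hnorm] at hxb
    exact lt_irrefl _ hxb
  · have h2 : ‖q • (θ : AddCircle (1:ℝ)) - θ₀‖ < c := by
      rw [← dist_eq_norm]; exact hxb
    calc ‖q • (θ : AddCircle (1:ℝ))‖ ≤ ‖q • (θ : AddCircle (1:ℝ)) - θ₀‖ + ‖θ₀‖ := by
          simpa using norm_add_le (q • (θ : AddCircle (1:ℝ)) - θ₀) θ₀
      _ < c + c := by rw [hnorm]; linarith
      _ < δ := by linarith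

lemma my_fourier_add_arg (q : ℤ) (x t : AddCircle (1:ℝ)) :
    (fourier q (x + t) : ℂ) = fourier q x * fourier q t := by
  simp_rw [fourier_apply, zsmul_add, AddCircle.toCircle_add, Circle.coe_mul]

lemma my_diff_bound (q : ℤ) (x t : AddCircle (1:ℝ)) :
    |(fourier q (x + t) : ℂ).re - (fourier q x : ℂ).re|
      ≤ ‖(fourier q t : ℂ) - 1‖ := by
  rw [my_fourier_add_arg]
  have : (fourier q x : ℂ).re = ((fourier q x : ℂ) * 1).re := by simp
  rw [this, ← Complex.sub_re, ← mul_sub]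
  refine (Complex.abs_re_le_norm _).trans ?_
  rw [norm_mul]
  rw [fourier_apply, Circle.norm_coe, one_mul]

lemma my_eta_neg (q : ℤ) (t : AddCircle (1:ℝ)) :
    ‖(fourier q (-t) : ℂ) - 1‖ = ‖(fourier q t : ℂ) - 1‖ := by
  have h : (fourier q (-t) : ℂ) = (starRingEnd ℂ) (fourier q t) := by
    rw [fourier_apply, fourier_apply, smul_neg, ← fourier_apply]
    exact fourier_neg'
  rw [h, show ((starRingEnd ℂ) (fourier q t) - 1 : ℂ)
      = (starRingEnd ℂ) ((fourier q t : ℂ) - 1) by rw [map_sub, map_one], Complex.norm_conj]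

lemma my_choose_q (θ : ℝ) (hθ : Irrational θ) {ε : ℝ} (hε : 0 < ε) :
    ∃ q : ℤ, q ≠ 0 ∧ ‖(fourier q ((θ : AddCircle (1:ℝ))) : ℂ) - 1‖ < ε := by
  have hcont : ContinuousAt (fun z : AddCircle (1:ℝ) => ‖(fourier 1 z : ℂ) - 1‖) 0 := by
    refine Continuous.continuousAt ?_
    exact continuous_norm.comp ((map_continuous (fourier 1)).sub continuous_const)
  rw [Metric.continuousAt_iff] at hcont
  obtain ⟨δ, hδ, hd⟩ := hcont ε hε
  obtain ⟨q, hq, hqδ⟩ := my_small θ hθ hδ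
  refine ⟨q, hq, ?_⟩
  have h0 : ‖(fourier 1 (0 : AddCircle (1:ℝ)) : ℂ) - 1‖ = 0 := by
    rw [fourier_eval_zero]; simp
  have := hd (show dist (q • (θ : AddCircle (1:ℝ))) 0 < δ by rwa [dist_zero_right])
  rw [h0, dist_eq_norm, sub_zero, Real.norm_eq_abs,
    abs_of_nonneg (norm_nonneg _)] at this
  have heq : (fourier q ((θ : AddCircle (1:ℝ))) : ℂ) = fourier 1 (q • (θ : AddCircle (1:ℝ))) := by
    rw [fourier_apply, fourier_apply, one_smul]
  rwa [heq]

/-- Failure of the Poincaré inequality for the irrational rotation random walk on the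
circle: with `m_x = (1/2) δ_{x-θ} + (1/2) δ_{x+θ}` (θ irrational) and `ν` the Haar measure
on the circle, `ν` is reversible with respect to `m`, but for every `p > 1` there is no
constant `Λ > 0` such that
`‖u - (mean of u)‖_{L^p} ≤ Λ (∫∫ |u(y)-u(x)|^p dm_x(y) dν(x))^{1/p}` for all
`u ∈ L^p(ν)`. -/
theorem stmt18 [Fact ((0 : ℝ) < 1)] (θ : ℝ) (hθ : Irrational θ)
    (m : AddCircle (1 : ℝ) → Measure (AddCircle (1 : ℝ)))
    (hm : ∀ x, m x = (1 / 2 : ℝ≥0∞) • Measure.dirac (x - (θ : AddCircle (1 : ℝ)))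
        + (1 / 2 : ℝ≥0∞) • Measure.dirac (x + (θ : AddCircle (1 : ℝ)))) :
    (∀ f : AddCircle (1 : ℝ) → AddCircle (1 : ℝ) → ℝ≥0∞,
        Measurable (Function.uncurry f) →
        ∫⁻ x, ∫⁻ y, f x y ∂(m x) ∂(volume : Measure (AddCircle (1 : ℝ)))
          = ∫⁻ x, ∫⁻ y, f y x ∂(m x) ∂(volume : Measure (AddCircle (1 : ℝ)))) ∧
      ∀ p : ℝ, 1 < p →
        ¬ ∃ Λ : ℝ, 0 < Λ ∧ ∀ u : AddCircle (1 : ℝ) → ℝ,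
            MemLp u (ENNReal.ofReal p) (volume : Measure (AddCircle (1 : ℝ))) →
            (∫⁻ x, ENNReal.ofReal
                (|u x - (∫ y, u y ∂(volume : Measure (AddCircle (1 : ℝ)))) /
                  ((volume : Measure (AddCircle (1 : ℝ)))
                    (Set.univ : Set (AddCircle (1 : ℝ)))).toReal| ^ p)
              ∂(volume : Measure (AddCircle (1 : ℝ)))) ^ (1 / p)
              ≤ ENNReal.ofReal Λ *
                (∫⁻ x, ∫⁻ y, ENNReal.ofReal (|u y - u x| ^ p) ∂(m x)
                  ∂(volume : Measure (AddCircle (1 : ℝ)))) ^ (1 / p) := by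
  constructor
  ·
    intro f hf
    set θ' : AddCircle (1:ℝ) := (θ : AddCircle (1:ℝ))
    have hmeas : ∀ g : AddCircle (1:ℝ) → AddCircle (1:ℝ) × AddCircle (1:ℝ),
        Measurable g → Measurable fun x => Function.uncurry f (g x) := fun g hg => hf.comp hg
    have hsub : Measurable fun x : AddCircle (1:ℝ) => x - θ' :=
      (continuous_id.sub continuous_const).measurable
    have hadd : Measurable fun x : AddCircle (1:ℝ) => x + θ' :=
      (continuous_id.add continuous_const).measurable
    have expand : ∀ g : AddCircle (1:ℝ) → AddCircle (1:ℝ) → ℝ≥0∞,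
        Measurable (Function.uncurry g) →
        ∫⁻ x, ∫⁻ y, g x y ∂(m x) ∂(volume : Measure (AddCircle (1 : ℝ)))
          = (1/2) * ∫⁻ x, g x (x - θ') ∂(volume : Measure (AddCircle (1 : ℝ)))
            + (1/2) * ∫⁻ x, g x (x + θ') ∂(volume : Measure (AddCircle (1 : ℝ))) := by
      intro g hg
      have h1 : ∀ x, ∫⁻ y, g x y ∂(m x) = 1/2 * g x (x - θ') + 1/2 * g x (x + θ') := by
        intro x
        have hgx : Measurable (g x) := hg.comp measurable_prodMk_left
        rw [hm x, lintegral_add_measure, lintegral_smul_measure, lintegral_smul_measure,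
          lintegral_dirac' _ hgx, lintegral_dirac' _ hgx]
        simp only [smul_eq_mul]
      simp_rw [h1]
      rw [lintegral_add_left]
      · rw [lintegral_const_mul' _ _ (by norm_num), lintegral_const_mul' _ _ (by norm_num)]
      · exact (hg.comp ((measurable_id.prodMk hsub))).const_mul _
    rw [expand f hf, expand (fun x y => f y x) (by exact hf.comp measurable_swap)]
    have mp := measurePreserving_add_right (volume : Measure (AddCircle (1:ℝ))) θ'
    have e1 : ∫⁻ x, f x (x - θ') ∂(volume : Measure (AddCircle (1 : ℝ)))
        = ∫⁻ x, f (x + θ') x ∂(volume : Measure (AddCircle (1 : ℝ))) := by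
      have := mp.lintegral_comp (f := fun z => f z (z - θ'))
        (hf.comp (measurable_id.prodMk hsub))
      rw [← this]
      simp [add_sub_cancel_right]
    have e2 : ∫⁻ x, f (x - θ') x ∂(volume : Measure (AddCircle (1 : ℝ)))
        = ∫⁻ x, f x (x + θ') ∂(volume : Measure (AddCircle (1 : ℝ))) := by
      have := mp.lintegral_comp (f := fun z => f (z - θ') z)
        (hf.comp (hsub.prodMk measurable_id))
      rw [← this]
      simp [add_sub_cancel_right]
    rw [e1, ← e2, add_comm]
  ·
    intro p hp
    rintro ⟨Λ, hΛ, H⟩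
    set ν : Measure (AddCircle (1:ℝ)) := volume with hν
    haveI : IsProbabilityMeasure ν := ⟨by rw [AddCircle.measure_univ]; simp⟩
    have hp0 : (0:ℝ) < p := lt_trans one_pos hp
    -- choose q
    have hε : (0:ℝ) < 1/(4*Λ) := by positivity
    obtain ⟨q, hq, hη⟩ := my_choose_q θ hθ hε
    set θ' : AddCircle (1:ℝ) := (θ : AddCircle (1:ℝ)) with hθ'
    set η : ℝ := ‖(fourier q θ' : ℂ) - 1‖ with hηdef
    have hη0 : 0 ≤ η := norm_nonneg _
    set u : AddCircle (1:ℝ) → ℝ := fun z => (fourier q z : ℂ).re with hu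
    have hu_cont : Continuous u := Complex.continuous_re.comp (map_continuous (fourier q))
    have hub : ∀ z, |u z| ≤ 1 := by
      intro z
      refine (Complex.abs_re_le_norm _).trans ?_
      rw [fourier_apply, Circle.norm_coe]
    have humem : MemLp u (ENNReal.ofReal p) ν :=
      MemLp.of_bound hu_cont.aestronglyMeasurable 1
        (Filter.Eventually.of_forall fun z => by rw [Real.norm_eq_abs]; exact hub z)
    have hmean : ∫ y, u y ∂ν = 0 := my_cos_int q hq
    have key := H u humem
    -- simplify mean
    rw [hmean] at key
    simp only [zero_div, sub_zero] at key
    -- lower bound for LHS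
    have hsqint : Integrable (fun x => u x ^ 2) ν := by
      refine memLp_one_iff_integrable.mp
        (MemLp.of_bound (hu_cont.pow 2).aestronglyMeasurable 1
          (Filter.Eventually.of_forall fun z => ?_))
      rw [Real.norm_eq_abs, abs_pow]
      nlinarith [hub z, abs_nonneg (u z)]
    have h12 : ENNReal.ofReal (1/2 : ℝ) ≤ ∫⁻ x, ENNReal.ofReal |u x| ∂ν := by
      calc ENNReal.ofReal (1/2 : ℝ) = ∫⁻ x, ENNReal.ofReal (u x ^ 2) ∂ν := by
            rw [← ofReal_integral_eq_lintegral_ofReal hsqint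
              (Filter.Eventually.of_forall fun x => sq_nonneg _), my_cos_sq_int q hq]
        _ ≤ ∫⁻ x, ENNReal.ofReal |u x| ∂ν := by
            refine lintegral_mono fun x => ENNReal.ofReal_le_ofReal ?_
            nlinarith [hub x, abs_nonneg (u x), sq_abs (u x)]
    have hpq : p.HolderConjugate (Real.conjExponent p) := Real.HolderConjugate.conjExponent hp
    have hFmeas : AEMeasurable (fun x => ENNReal.ofReal |u x|) ν :=
      (ENNReal.measurable_ofReal.comp hu_cont.abs.measurable).aemeasurable
    have hHolder := ENNReal.lintegral_mul_le_Lp_mul_Lq ν hpq hFmeas aemeasurable_const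
      (g := fun _ => (1:ℝ≥0∞))
    simp only [Pi.mul_apply, mul_one, ENNReal.one_rpow, lintegral_const, measure_univ,
      ENNReal.rpow_one] at hHolder
    have hHolder2 : ∫⁻ x, ENNReal.ofReal |u x| ∂ν
        ≤ (∫⁻ x, ENNReal.ofReal (|u x| ^ p) ∂ν) ^ (1/p) := by
      refine le_trans hHolder (le_of_eq ?_)
      congr 1
      refine lintegral_congr fun x => ?_
      rw [ENNReal.ofReal_rpow_of_nonneg (abs_nonneg _) hp0.le]
    have hLB : ENNReal.ofReal (1/2 : ℝ)
        ≤ (∫⁻ x, ENNReal.ofReal (|u x| ^ p) ∂ν) ^ (1/p) := le_trans h12 hHolder2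
    -- upper bound for energy
    have hdiff : ∀ x t, ‖(fourier q t : ℂ) - 1‖ = η → |u (x + t) - u x| ≤ η := by
      intro x t ht
      rw [← ht]
      exact my_diff_bound q x t
    have hterm : ∀ x t, ‖(fourier q t : ℂ) - 1‖ = η →
        ENNReal.ofReal (|u (x + t) - u x| ^ p) ≤ ENNReal.ofReal (η ^ p) := by
      intro x t ht
      exact ENNReal.ofReal_le_ofReal
        (Real.rpow_le_rpow (abs_nonneg _) (hdiff x t ht) hp0.le)
    have hmeasE : ∀ x : AddCircle (1:ℝ),
        Measurable fun y => ENNReal.ofReal (|u y - u x| ^ p) := by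
      intro x
      exact (ENNReal.continuous_ofReal.comp
        ((Real.continuous_rpow_const hp0.le).comp (hu_cont.sub continuous_const).abs)).measurable
    have hEx : ∀ x, (∫⁻ y, ENNReal.ofReal (|u y - u x| ^ p) ∂(m x)) ≤ ENNReal.ofReal (η ^ p) := by
      intro x
      rw [hm x, lintegral_add_measure, lintegral_smul_measure, lintegral_smul_measure,
        lintegral_dirac' _ (hmeasE x), lintegral_dirac' _ (hmeasE x)]
      simp only [smul_eq_mul]
      have b1 : ENNReal.ofReal (|u (x - θ') - u x| ^ p) ≤ ENNReal.ofReal (η ^ p) := by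
        rw [sub_eq_add_neg]
        exact hterm x (-θ') (my_eta_neg q θ')
      have b2 : ENNReal.ofReal (|u (x + θ') - u x| ^ p) ≤ ENNReal.ofReal (η ^ p) :=
        hterm x θ' rfl
      calc 1/2 * ENNReal.ofReal (|u (x - θ') - u x| ^ p)
            + 1/2 * ENNReal.ofReal (|u (x + θ') - u x| ^ p)
          ≤ 1/2 * ENNReal.ofReal (η ^ p) + 1/2 * ENNReal.ofReal (η ^ p) :=
            add_le_add (mul_le_mul_right b1 _) (mul_le_mul_right b2 _)
        _ = ENNReal.ofReal (η ^ p) := by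
            rw [← add_mul]
            rw [ENNReal.add_halves 1, one_mul]
    have hE : (∫⁻ x, ∫⁻ y, ENNReal.ofReal (|u y - u x| ^ p) ∂(m x) ∂ν)
        ≤ ENNReal.ofReal (η ^ p) := by
      calc (∫⁻ x, ∫⁻ y, ENNReal.ofReal (|u y - u x| ^ p) ∂(m x) ∂ν)
          ≤ ∫⁻ _x, ENNReal.ofReal (η ^ p) ∂ν := lintegral_mono hEx
        _ = ENNReal.ofReal (η ^ p) := by simp
    have hErpow : (∫⁻ x, ∫⁻ y, ENNReal.ofReal (|u y - u x| ^ p) ∂(m x) ∂ν) ^ (1/p)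
        ≤ ENNReal.ofReal η := by
      calc (∫⁻ x, ∫⁻ y, ENNReal.ofReal (|u y - u x| ^ p) ∂(m x) ∂ν) ^ (1/p)
          ≤ (ENNReal.ofReal (η ^ p)) ^ (1/p) :=
            ENNReal.rpow_le_rpow hE (by positivity)
        _ = ENNReal.ofReal η := by
            rw [← ENNReal.ofReal_rpow_of_nonneg hη0 hp0.le, ← ENNReal.rpow_mul,
              mul_one_div_cancel hp0.ne', ENNReal.rpow_one]
    -- combine
    have hfinal : ENNReal.ofReal (1/2 : ℝ) ≤ ENNReal.ofReal (Λ * η) := by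
      calc ENNReal.ofReal (1/2 : ℝ)
          ≤ (∫⁻ x, ENNReal.ofReal (|u x| ^ p) ∂ν) ^ (1/p) := hLB
        _ ≤ ENNReal.ofReal Λ *
            (∫⁻ x, ∫⁻ y, ENNReal.ofReal (|u y - u x| ^ p) ∂(m x) ∂ν) ^ (1/p) := key
        _ ≤ ENNReal.ofReal Λ * ENNReal.ofReal η := mul_le_mul_right hErpow _
        _ = ENNReal.ofReal (Λ * η) := (ENNReal.ofReal_mul hΛ.le).symm
    rw [ENNReal.ofReal_le_ofReal_iff (by positivity)] at hfinal
    have : Λ * η < Λ * (1/(4*Λ)) := mul_lt_mul_of_pos_left hη hΛ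
    rw [show Λ * (1/(4*Λ)) = 1/4 by field_simp] at this
    linarith
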